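/- Let $q$ be a positive integer, and write $b = \prod_{p^e \| q,\, e \leq 2} p^e$ and $d = \prod_{p^e \| q,\, e \geq 3,\, e \text{ odd}} p$. Then there exists a positive integer $c$ such that $q = b c^2 d$, $d \mid c$, $\gcd(b, c^2 d) = 1$, and there exists a divisor $d_0$ of $d$ such that $c/(d_0 d)$ is a square-full integer. -/
import Mathlib

lemma fact_prod_pow (S : Finset ℕ) (hS : ∀ p ∈ S, p.Prime) (f : ℕ → ℕ) (r : ℕ) :
    (∏ p ∈ S, p ^ f p).factorization r = if r ∈ S then f r else 0 := by
  rw [Nat.factorization_prod (fun p hp => pow_ne_zero _ (hS p hp).pos.ne')]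
  rw [Finset.sum_apply']
  rw [Finset.sum_congr rfl (fun p hp => by
    rw [(hS p hp).factorization_pow, Finsupp.single_apply])]
  simp [Finset.sum_ite_eq' S r f]

/-- The factorisation `q = b c² d` of (2.2)/(6.4) of the paper: with
`b = ∏_{p^e ∥ q, e ≤ 2} p^e` and `d = ∏_{p^e ∥ q, e ≥ 3 odd} p`, there is a
positive integer `c` with `q = b c² d`, `d ∣ c`, `gcd(b, c²d) = 1`, and a
divisor `d₀` of `d` such that `c/(d₀ d)` is square-full. -/
theorem stmt_8 (q : ℕ) (hq : 0 < q) (b d : ℕ)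
    (hb : b = ∏ p ∈ q.primeFactors.filter (fun p => q.factorization p ≤ 2),
        p ^ (q.factorization p))
    (hd : d = ∏ p ∈ q.primeFactors.filter
        (fun p => 3 ≤ q.factorization p ∧ q.factorization p % 2 = 1), p) :
    ∃ c : ℕ, 0 < c ∧ q = b * c ^ 2 * d ∧ d ∣ c ∧ Nat.Coprime b (c ^ 2 * d) ∧
      ∃ d₀ : ℕ, d₀ ∣ d ∧ d₀ * d ∣ c ∧
        ∀ p : ℕ, p.Prime → p ∣ c / (d₀ * d) → p ^ 2 ∣ c / (d₀ * d) := by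
  set e := q.factorization with he
  set c := ∏ p ∈ q.primeFactors.filter (fun p => 3 ≤ e p), p ^ (e p / 2) with hc
  set d₀ := ∏ p ∈ q.primeFactors.filter (fun p => e p = 5), p with hd₀
  have hprime : ∀ (P : ℕ → Prop) [DecidablePred P] (p : ℕ),
      p ∈ q.primeFactors.filter P → p.Prime :=
    fun P _ p hp => Nat.prime_of_mem_primeFactors (Finset.mem_filter.mp hp).1
  -- membership characterization
  have hmem : ∀ r, r ∈ q.primeFactors ↔ e r ≠ 0 := by
    intro r
    rw [← Nat.support_factorization, Finsupp.mem_support_iff]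
  -- factorization values
  have hbf : ∀ r, b.factorization r = if e r ≠ 0 ∧ e r ≤ 2 then e r else 0 := by
    intro r
    rw [hb, fact_prod_pow _ (hprime _) _ r]
    simp [Finset.mem_filter, hmem r]
  have hcf : ∀ r, c.factorization r = if e r ≠ 0 ∧ 3 ≤ e r then e r / 2 else 0 := by
    intro r
    rw [hc, fact_prod_pow _ (hprime _) _ r]
    simp [Finset.mem_filter, hmem r]
  have hdf : ∀ r, d.factorization r
      = if e r ≠ 0 ∧ 3 ≤ e r ∧ e r % 2 = 1 then 1 else 0 := by
    intro r
    rw [hd, show (∏ p ∈ q.primeFactors.filter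
        (fun p => 3 ≤ e p ∧ e p % 2 = 1), p)
      = ∏ p ∈ q.primeFactors.filter (fun p => 3 ≤ e p ∧ e p % 2 = 1), p ^ (fun _ => 1) p
      by simp, fact_prod_pow _ (hprime _) _ r]
    simp [Finset.mem_filter, hmem r, and_assoc]
  have hd₀f : ∀ r, d₀.factorization r = if e r ≠ 0 ∧ e r = 5 then 1 else 0 := by
    intro r
    rw [hd₀, show (∏ p ∈ q.primeFactors.filter (fun p => e p = 5), p)
      = ∏ p ∈ q.primeFactors.filter (fun p => e p = 5), p ^ (fun _ => 1) p
      by simp, fact_prod_pow _ (hprime _) _ r]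
    simp [Finset.mem_filter, hmem r]
  -- nonzeroness
  have hb0 : b ≠ 0 := hb ▸ Finset.prod_ne_zero_iff.mpr
    (fun p hp => pow_ne_zero _ (hprime _ p hp).pos.ne')
  have hc0 : c ≠ 0 := hc ▸ Finset.prod_ne_zero_iff.mpr
    (fun p hp => pow_ne_zero _ (hprime _ p hp).pos.ne')
  have hd0 : d ≠ 0 := hd ▸ Finset.prod_ne_zero_iff.mpr
    (fun p hp => (hprime _ p hp).pos.ne')
  have hd₀0 : d₀ ≠ 0 := hd₀ ▸ Finset.prod_ne_zero_iff.mpr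
    (fun p hp => (hprime _ p hp).pos.ne')
  refine ⟨c, Nat.pos_of_ne_zero hc0, ?_, ?_, ?_, d₀, ?_, ?_, ?_⟩
  · -- q = b * c^2 * d
    refine Nat.eq_of_factorization_eq hq.ne' (by positivity) (fun r => ?_)
    rw [Nat.factorization_mul (mul_ne_zero hb0 (pow_ne_zero 2 hc0)) hd0,
      Nat.factorization_mul hb0 (pow_ne_zero 2 hc0), Nat.factorization_pow]
    simp only [Finsupp.add_apply, Finsupp.smul_apply, smul_eq_mul]
    rw [hbf r, hcf r, hdf r, ← he]
    split_ifs <;> omega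
  · -- d ∣ c
    rw [← Nat.factorization_le_iff_dvd hd0 hc0, Finsupp.le_def]
    intro r
    rw [hdf r, hcf r]
    split_ifs <;> omega
  · -- coprime
    rw [Nat.Coprime, Nat.eq_one_iff_not_exists_prime_dvd]
    intro p pp hdvd
    have hpb := hdvd.trans (Nat.gcd_dvd_left _ _)
    have hpcd := hdvd.trans (Nat.gcd_dvd_right _ _)
    have h1 := (pp.dvd_iff_one_le_factorization hb0).mp hpb
    have h2 := (pp.dvd_iff_one_le_factorization
      (mul_ne_zero (pow_ne_zero 2 hc0) hd0)).mp hpcd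
    rw [Nat.factorization_mul (pow_ne_zero 2 hc0) hd0, Nat.factorization_pow] at h2
    simp only [Finsupp.add_apply, Finsupp.smul_apply, smul_eq_mul] at h2
    rw [hbf p] at h1
    rw [hcf p, hdf p] at h2
    split_ifs at h1 h2 <;> omega
  · -- d₀ ∣ d
    rw [← Nat.factorization_le_iff_dvd hd₀0 hd0, Finsupp.le_def]
    intro r
    rw [hd₀f r, hdf r]
    split_ifs <;> omega
  · -- d₀ * d ∣ c
    rw [← Nat.factorization_le_iff_dvd (mul_ne_zero hd₀0 hd0) hc0, Finsupp.le_def]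
    intro r
    rw [Nat.factorization_mul hd₀0 hd0]
    simp only [Finsupp.add_apply]
    rw [hd₀f r, hdf r, hcf r]
    split_ifs <;> omega
  · -- square-full
    intro p pp hdvd
    have hdd : d₀ * d ∣ c := by
      rw [← Nat.factorization_le_iff_dvd (mul_ne_zero hd₀0 hd0) hc0, Finsupp.le_def]
      intro r
      rw [Nat.factorization_mul hd₀0 hd0]
      simp only [Finsupp.add_apply]
      rw [hd₀f r, hdf r, hcf r]
      split_ifs <;> omega
    have hm0 : c / (d₀ * d) ≠ 0 :=
      Nat.div_ne_zero_iff_of_dvd hdd |>.mpr ⟨hc0, mul_ne_zero hd₀0 hd0⟩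
    rw [pp.pow_dvd_iff_le_factorization hm0]
    have h1 := (pp.dvd_iff_one_le_factorization hm0).mp hdvd
    rw [Nat.factorization_div hdd] at h1 ⊢
    rw [Finsupp.tsub_apply] at h1 ⊢
    rw [Nat.factorization_mul hd₀0 hd0] at h1 ⊢
    simp only [Finsupp.add_apply] at h1 ⊢
    rw [hd₀f p, hdf p, hcf p] at h1 ⊢
    split_ifs at h1 ⊢ <;> omega
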